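/- Let G be a (C₄, C₄)-dumbbell, i.e. an (H₁,H₂)-dumbbell in which both plates H₁ and H₂ are isomorphic to the 4-cycle. Then G admits a (7,3)-configuration. -/

import Mathlib

open SimpleGraph

/-- A set of vertices `D` is dominating in `G` if every vertex not in `D`
has a neighbour in `D`. -/
def Dominating {V : Type*} (G : SimpleGraph V) (D : Finset V) : Prop :=
  ∀ v : V, v ∉ D → ∃ u ∈ D, G.Adj v u

/-- A `(k,s)`-configuration of `G`: a multiset of `k` dominating sets of `G`
such that every vertex belongs to at most `s` of them. -/
def IsConfig {V : Type*} [DecidableEq V] (G : SimpleGraph V)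
    (𝒟 : Multiset (Finset V)) (k s : ℕ) : Prop :=
  Multiset.card 𝒟 = k ∧ (∀ D ∈ 𝒟, Dominating G D) ∧
    ∀ v : V, 𝒟.countP (fun D => v ∈ D) ≤ s

/-- `G` is an `(H₁,H₂)`-dumbbell with plates the subgraphs `H₁` and `H₂`:
the plates have at most one vertex in common, and `G` is the union of `H₁`, `H₂` and
a path `P` (the handle, with at least one vertex) that is binary in `G` (all its
internal vertices have degree 2 in `G`), where each plate meets `P` in exactly one
vertex, which is an end-vertex of `P`, and the plates are vertex disjoint whenever
`P` has at least two vertices. -/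
def IsDumbbell {V : Type*} (G : SimpleGraph V) (H₁ H₂ : G.Subgraph) : Prop :=
  (H₁.verts ∩ H₂.verts).Subsingleton ∧
  ∃ (x y : V) (P : G.Walk x y),
    P.IsPath ∧
    (∀ v ∈ P.support, v ≠ x → v ≠ y → (G.neighborSet v).ncard = 2) ∧
    H₁ ⊔ H₂ ⊔ P.toSubgraph = ⊤ ∧
    H₁.verts ∩ {v | v ∈ P.support} = {x} ∧
    H₂.verts ∩ {v | v ∈ P.support} = {y} ∧
    (x ≠ y → Disjoint H₁.verts H₂.verts)

namespace Stmt10Aux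

/-- `getVert` is injective on `[0, length]` for a path. -/
lemma getVert_inj {V : Type*} {G : SimpleGraph V} {u v : V} {w : G.Walk u v} (hw : w.IsPath) :
    ∀ i, i ≤ w.length → ∀ j, j ≤ w.length → w.getVert i = w.getVert j → i = j := by
  induction w with
  | nil => intro i hi j hj _; simp only [SimpleGraph.Walk.length_nil] at hi hj; omega
  | cons h q ih =>
    rw [SimpleGraph.Walk.cons_isPath_iff] at hw
    intro i hi j hj hij
    rw [SimpleGraph.Walk.length_cons] at hi hj
    match i, j with
    | 0, 0 => rfl
    | 0, j+1 =>
      exfalso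
      apply hw.2
      rw [SimpleGraph.Walk.mem_support_iff_exists_getVert]
      simp only [SimpleGraph.Walk.getVert_zero, SimpleGraph.Walk.getVert_cons_succ] at hij
      exact ⟨j, hij.symm, by omega⟩
    | i+1, 0 =>
      exfalso
      apply hw.2
      rw [SimpleGraph.Walk.mem_support_iff_exists_getVert]
      simp only [SimpleGraph.Walk.getVert_zero, SimpleGraph.Walk.getVert_cons_succ] at hij
      exact ⟨i, hij, by omega⟩
    | i+1, j+1 =>
      simp only [SimpleGraph.Walk.getVert_cons_succ] at hij
      have := ih hw.1 i (by omega) j (by omega) hij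
      omega

variable {V : Type*} [DecidableEq V]

/-- The candidate dominating set built from a part `A` of the first 4-cycle,
a part `B` of the second 4-cycle, and the handle-vertices with index `≡ r (mod 3)`. -/
def SAB (a b p : ℕ → V) (n : ℕ) (A B : Finset ℕ) (r : ℕ) : Finset V :=
  A.image a ∪ B.image b ∪ ((Finset.range (n+1)).filter (fun i => i % 3 = r)).image p

/-- Abstract description of a `(C₄,C₄)`-dumbbell: `a 0,…,a 3` is the first cycle,
`b 0,…,b 3` the second, `p 0,…,p n` the handle, with `p 0 = a 0`, `p n = b 0`. -/
structure Setup {V : Type*} (G : SimpleGraph V) (a b p : ℕ → V) (n : ℕ) : Prop where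
  ha01 : G.Adj (a 0) (a 1)
  ha12 : G.Adj (a 1) (a 2)
  ha23 : G.Adj (a 2) (a 3)
  ha30 : G.Adj (a 3) (a 0)
  hb01 : G.Adj (b 0) (b 1)
  hb12 : G.Adj (b 1) (b 2)
  hb23 : G.Adj (b 2) (b 3)
  hb30 : G.Adj (b 3) (b 0)
  hp : ∀ i, i < n → G.Adj (p i) (p (i+1))
  hpa : p 0 = a 0
  hpb : p n = b 0
  cov : ∀ v : V, (∃ k, k < 4 ∧ v = a k) ∨ (∃ k, k < 4 ∧ v = b k) ∨ (∃ i, i ≤ n ∧ v = p i)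
  inja : ∀ k, k < 4 → ∀ l, l < 4 → a k = a l → k = l
  injb : ∀ k, k < 4 → ∀ l, l < 4 → b k = b l → k = l
  injp : ∀ i, i ≤ n → ∀ j, j ≤ n → p i = p j → i = j
  hap : ∀ k, k < 4 → ∀ i, i ≤ n → a k = p i → k = 0 ∧ i = 0
  hbp : ∀ k, k < 4 → ∀ i, i ≤ n → b k = p i → k = 0 ∧ i = n
  hab : ∀ k, k < 4 → ∀ l, l < 4 → a k = b l → k = 0 ∧ l = 0

/-- Conditions on a triple `(A, B, r)` making `SAB` a dominating set. -/
def Good (n : ℕ) (A B : Finset ℕ) (r : ℕ) : Prop :=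
  (∀ m ∈ A, m = 1 ∨ m = 2 ∨ m = 3) ∧ (∀ m ∈ B, m = 1 ∨ m = 2 ∨ m = 3) ∧ r < 3 ∧
  (1 ∈ A ∨ 2 ∈ A ∨ r = 0) ∧ (1 ∈ A ∨ 2 ∈ A ∨ 3 ∈ A) ∧ (3 ∈ A ∨ 2 ∈ A ∨ r = 0) ∧
  (1 ∈ B ∨ 2 ∈ B ∨ r = n % 3) ∧ (1 ∈ B ∨ 2 ∈ B ∨ 3 ∈ B) ∧ (3 ∈ B ∨ 2 ∈ B ∨ r = n % 3) ∧
  (r = 0 ∨ (1 ≤ n ∧ 1 % 3 = r) ∨ 1 ∈ A ∨ 3 ∈ A ∨ (n = 0 ∧ (1 ∈ B ∨ 3 ∈ B))) ∧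
  (r = n % 3 ∨ (1 ≤ n ∧ (n - 1) % 3 = r) ∨ 1 ∈ B ∨ 3 ∈ B ∨ (n = 0 ∧ (1 ∈ A ∨ 3 ∈ A)))

variable {G : SimpleGraph V} {a b p : ℕ → V} {n : ℕ} {A B : Finset ℕ} {r : ℕ}

lemma memA_of (h : ∀ k ∈ A, True := fun _ _ => trivial) : ∀ k ∈ A, a k ∈ SAB a b p n A B r :=
  fun k hk => Finset.mem_union_left _ (Finset.mem_union_left _ (Finset.mem_image_of_mem a hk))

lemma memB_of : ∀ k ∈ B, b k ∈ SAB a b p n A B r :=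
  fun k hk => Finset.mem_union_left _ (Finset.mem_union_right _ (Finset.mem_image_of_mem b hk))

lemma memP_of (i : ℕ) (hi : i ≤ n) (h : i % 3 = r) : p i ∈ SAB a b p n A B r :=
  Finset.mem_union_right _ (Finset.mem_image_of_mem p
    (Finset.mem_filter.mpr ⟨Finset.mem_range.mpr (Nat.lt_succ_of_le hi), h⟩))

lemma mem_a_iff (st : Setup G a b p n)
    (hA : ∀ m ∈ A, m = 1 ∨ m = 2 ∨ m = 3) (hB : ∀ m ∈ B, m = 1 ∨ m = 2 ∨ m = 3)
    {k : ℕ} (hk : k = 1 ∨ k = 2 ∨ k = 3) :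
    a k ∈ SAB a b p n A B r ↔ k ∈ A := by
  constructor
  · intro hmem
    have hk4 : k < 4 := by omega
    simp only [SAB, Finset.mem_union, Finset.mem_image, Finset.mem_filter,
      Finset.mem_range, Nat.lt_succ_iff] at hmem
    rcases hmem with (⟨m, hm, hma⟩ | ⟨m, hm, hmb⟩) | ⟨j, ⟨hj, hj3⟩, hjp⟩
    · have hm4 : m < 4 := by rcases hA m hm with rfl | rfl | rfl <;> omega
      rwa [st.inja m hm4 k hk4 hma] at hm
    · have hm4 : m < 4 := by rcases hB m hm with rfl | rfl | rfl <;> omega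
      have := st.hab k hk4 m hm4 hmb.symm
      omega
    · have := st.hap k hk4 j hj hjp.symm
      omega
  · intro h
    exact Finset.mem_union_left _ (Finset.mem_union_left _ (Finset.mem_image_of_mem a h))

lemma mem_b_iff (st : Setup G a b p n)
    (hA : ∀ m ∈ A, m = 1 ∨ m = 2 ∨ m = 3) (hB : ∀ m ∈ B, m = 1 ∨ m = 2 ∨ m = 3)
    {k : ℕ} (hk : k = 1 ∨ k = 2 ∨ k = 3) :
    b k ∈ SAB a b p n A B r ↔ k ∈ B := by
  constructor
  · intro hmem
    have hk4 : k < 4 := by omega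
    simp only [SAB, Finset.mem_union, Finset.mem_image, Finset.mem_filter,
      Finset.mem_range, Nat.lt_succ_iff] at hmem
    rcases hmem with (⟨m, hm, hma⟩ | ⟨m, hm, hmb⟩) | ⟨j, ⟨hj, hj3⟩, hjp⟩
    · have hm4 : m < 4 := by rcases hA m hm with rfl | rfl | rfl <;> omega
      have := st.hab m hm4 k hk4 hma
      omega
    · have hm4 : m < 4 := by rcases hB m hm with rfl | rfl | rfl <;> omega
      rwa [st.injb m hm4 k hk4 hmb] at hm
    · have := st.hbp k hk4 j hj hjp.symm
      -- k = 0 contradicts hk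
      omega
  · intro h
    exact Finset.mem_union_left _ (Finset.mem_union_right _ (Finset.mem_image_of_mem b h))

lemma mem_p_iff (st : Setup G a b p n)
    (hA : ∀ m ∈ A, m = 1 ∨ m = 2 ∨ m = 3) (hB : ∀ m ∈ B, m = 1 ∨ m = 2 ∨ m = 3)
    {i : ℕ} (hi : i ≤ n) :
    p i ∈ SAB a b p n A B r ↔ i % 3 = r := by
  constructor
  · intro hmem
    simp only [SAB, Finset.mem_union, Finset.mem_image, Finset.mem_filter,
      Finset.mem_range, Nat.lt_succ_iff] at hmem
    rcases hmem with (⟨m, hm, hma⟩ | ⟨m, hm, hmb⟩) | ⟨j, ⟨hj, hj3⟩, hjp⟩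
    · have hm4 : m < 4 := by rcases hA m hm with rfl | rfl | rfl <;> omega
      have := st.hap m hm4 i hi hma
      rcases hA m hm with rfl | rfl | rfl <;> omega
    · have hm4 : m < 4 := by rcases hB m hm with rfl | rfl | rfl <;> omega
      have := st.hbp m hm4 i hi hmb
      rcases hB m hm with rfl | rfl | rfl <;> omega
    · have := st.injp j hj i hi hjp
      omega
  · intro h
    exact memP_of i hi h

lemma dom (st : Setup G a b p n) (h : Good n A B r) :
    Dominating G (SAB a b p n A B r) := by
  obtain ⟨hA, hB, hr, hA1, hA2, hA3, hB1, hB2, hB3, hx, hy⟩ := h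
  set S := SAB a b p n A B r with hS
  have memA : ∀ k ∈ A, a k ∈ S := fun k hk =>
    Finset.mem_union_left _ (Finset.mem_union_left _ (Finset.mem_image_of_mem a hk))
  have memB : ∀ k ∈ B, b k ∈ S := fun k hk =>
    Finset.mem_union_left _ (Finset.mem_union_right _ (Finset.mem_image_of_mem b hk))
  have memP : ∀ i, i ≤ n → i % 3 = r → p i ∈ S := fun i hi h3 => memP_of i hi h3
  have hab0 : n = 0 → a 0 = b 0 := by
    intro h0
    have h1 := st.hpb
    rw [h0] at h1
    rw [← st.hpa, h1]
  have gx : a 0 ∈ S ∨ ∃ u ∈ S, G.Adj (a 0) u := by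
    rcases hx with h | ⟨hn1, h⟩ | h | h | ⟨hn0, h⟩
    · left; rw [← st.hpa]; exact memP 0 (Nat.zero_le n) (by omega)
    · right
      refine ⟨p 1, memP 1 hn1 h, ?_⟩
      have := st.hp 0 hn1
      rwa [st.hpa] at this
    · right; exact ⟨a 1, memA 1 h, st.ha01⟩
    · right; exact ⟨a 3, memA 3 h, st.ha30.symm⟩
    · right
      have e := hab0 hn0
      rcases h with h | h
      · exact ⟨b 1, memB 1 h, e ▸ st.hb01⟩
      · exact ⟨b 3, memB 3 h, e ▸ st.hb30.symm⟩
  have gy : b 0 ∈ S ∨ ∃ u ∈ S, G.Adj (b 0) u := by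
    rcases hy with h | ⟨hn1, h⟩ | h | h | ⟨hn0, h⟩
    · left; rw [← st.hpb]; exact memP n le_rfl (by omega)
    · right
      refine ⟨p (n-1), memP (n-1) (by omega) h, ?_⟩
      have := st.hp (n-1) (by omega)
      rw [show n - 1 + 1 = n from by omega, st.hpb] at this
      exact this.symm
    · right; exact ⟨b 1, memB 1 h, st.hb01⟩
    · right; exact ⟨b 3, memB 3 h, st.hb30.symm⟩
    · right
      have e := (hab0 hn0).symm
      rcases h with h | h
      · exact ⟨a 1, memA 1 h, e ▸ st.ha01⟩
      · exact ⟨a 3, memA 3 h, e ▸ st.ha30.symm⟩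
  intro v hv
  rcases st.cov v with ⟨k, hk, rfl⟩ | ⟨k, hk, rfl⟩ | ⟨i, hi, rfl⟩
  · interval_cases k
    · rcases gx with h | h
      · exact absurd h hv
      · exact h
    · rcases hA1 with h | h | h
      · exact absurd (memA 1 h) hv
      · exact ⟨a 2, memA 2 h, st.ha12⟩
      · refine ⟨p 0, memP 0 (Nat.zero_le n) (by omega), ?_⟩
        rw [st.hpa]; exact st.ha01.symm
    · rcases hA2 with h | h | h
      · exact ⟨a 1, memA 1 h, st.ha12.symm⟩
      · exact absurd (memA 2 h) hv
      · exact ⟨a 3, memA 3 h, st.ha23⟩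
    · rcases hA3 with h | h | h
      · exact absurd (memA 3 h) hv
      · exact ⟨a 2, memA 2 h, st.ha23.symm⟩
      · refine ⟨p 0, memP 0 (Nat.zero_le n) (by omega), ?_⟩
        rw [st.hpa]; exact st.ha30
  · interval_cases k
    · rcases gy with h | h
      · exact absurd h hv
      · exact h
    · rcases hB1 with h | h | h
      · exact absurd (memB 1 h) hv
      · exact ⟨b 2, memB 2 h, st.hb12⟩
      · refine ⟨p n, memP n le_rfl (by omega), ?_⟩
        rw [st.hpb]; exact st.hb01.symm
    · rcases hB2 with h | h | h
      · exact ⟨b 1, memB 1 h, st.hb12.symm⟩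
      · exact absurd (memB 2 h) hv
      · exact ⟨b 3, memB 3 h, st.hb23⟩
    · rcases hB3 with h | h | h
      · exact absurd (memB 3 h) hv
      · exact ⟨b 2, memB 2 h, st.hb23.symm⟩
      · refine ⟨p n, memP n le_rfl (by omega), ?_⟩
        rw [st.hpb]; exact st.hb30
  · rcases Nat.eq_zero_or_pos i with rfl | hi0
    · rw [st.hpa] at hv ⊢
      rcases gx with h | h
      · exact absurd h hv
      · exact h
    rcases eq_or_lt_of_le hi with rfl | hilt
    · rw [st.hpb] at hv ⊢
      rcases gy with h | h
      · exact absurd h hv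
      · exact h
    have h3 : i % 3 = r ∨ (i+1) % 3 = r ∨ (i-1) % 3 = r := by omega
    rcases h3 with h | h | h
    · exact absurd (memP i hi h) hv
    · exact ⟨p (i+1), memP (i+1) (by omega) h, st.hp i hilt⟩
    · refine ⟨p (i-1), memP (i-1) (by omega) h, ?_⟩
      have := st.hp (i-1) (by omega)
      rw [show i - 1 + 1 = i from by omega] at this
      exact this.symm

lemma config_table (st : Setup G a b p n) (M : Multiset (Finset ℕ × Finset ℕ × ℕ))
    (hlen : Multiset.card M = 7)
    (hgood : ∀ t ∈ M, Good n t.1 t.2.1 t.2.2)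
    (hca : ∀ k ∈ ([1, 2, 3] : List ℕ), M.countP (fun t => k ∈ t.1) ≤ 3)
    (hcb : ∀ k ∈ ([1, 2, 3] : List ℕ), M.countP (fun t => k ∈ t.2.1) ≤ 3)
    (hcp : ∀ m ∈ ([0, 1, 2] : List ℕ), M.countP (fun t => t.2.2 = m) ≤ 3) :
    ∃ 𝒟 : Multiset (Finset V), IsConfig G 𝒟 7 3 := by
  refine ⟨M.map (fun t => SAB a b p n t.1 t.2.1 t.2.2), ?_, ?_, ?_⟩
  · rw [Multiset.card_map, hlen]
  · intro D hD
    rw [Multiset.mem_map] at hD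
    obtain ⟨t, ht, rfl⟩ := hD
    exact dom st (hgood t ht)
  · intro v
    have key : ∀ (w : V) (q : Finset ℕ × Finset ℕ × ℕ → Prop) [DecidablePred q],
        (∀ t ∈ M, (w ∈ SAB a b p n t.1 t.2.1 t.2.2) ↔ q t) → M.countP q ≤ 3 →
        Multiset.countP (fun D => w ∈ D)
          (M.map (fun t => SAB a b p n t.1 t.2.1 t.2.2)) ≤ 3 := by
      intro w q _ hiff hle
      rw [Multiset.countP_map]
      rw [Multiset.countP_eq_card_filter] at hle
      refine le_trans (le_of_eq ?_) hle
      congr 1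
      exact Multiset.filter_congr (fun t ht => hiff t ht)
    have hpcase : ∀ i, i ≤ n →
        Multiset.countP (fun D => p i ∈ D)
          (M.map (fun t => SAB a b p n t.1 t.2.1 t.2.2)) ≤ 3 := by
      intro i hi
      refine key (p i) (fun t => t.2.2 = i % 3) ?_ ?_
      · intro t ht
        rw [mem_p_iff st (hgood t ht).1 (hgood t ht).2.1 hi]
        exact ⟨fun h => h.symm, fun h => h.symm⟩
      · exact hcp (i % 3) (by simp; omega)
    rcases st.cov v with ⟨k, hk, rfl⟩ | ⟨k, hk, rfl⟩ | ⟨i, hi, rfl⟩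
    · rcases Nat.eq_zero_or_pos k with rfl | hk0
      · rw [← st.hpa]
        exact hpcase 0 (Nat.zero_le n)
      · have hk3 : k = 1 ∨ k = 2 ∨ k = 3 := by omega
        refine key (a k) (fun t => k ∈ t.1) ?_ ?_
        · intro t ht
          exact mem_a_iff st (hgood t ht).1 (hgood t ht).2.1 hk3
        · exact hca k (by rcases hk3 with rfl | rfl | rfl <;> simp)
    · rcases Nat.eq_zero_or_pos k with rfl | hk0
      · rw [← st.hpb]
        exact hpcase n le_rfl
      · have hk3 : k = 1 ∨ k = 2 ∨ k = 3 := by omega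
        refine key (b k) (fun t => k ∈ t.2.1) ?_ ?_
        · intro t ht
          exact mem_b_iff st (hgood t ht).1 (hgood t ht).2.1 hk3
        · exact hcb k (by rcases hk3 with rfl | rfl | rfl <;> simp)
    · exact hpcase i hi

end Stmt10Aux

open Stmt10Aux Fin.NatCast Fin.CommRing in
/-- A `(C₄,C₄)`-dumbbell admits a `(7,3)`-configuration. -/
theorem stmt_10 {V : Type*} [Fintype V] [DecidableEq V] (G : SimpleGraph V)
    (H₁ H₂ : G.Subgraph) (hd : IsDumbbell G H₁ H₂)
    (h1 : Nonempty (H₁.coe ≃g cycleGraph 4))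
    (h2 : Nonempty (H₂.coe ≃g cycleGraph 4)) :
    ∃ 𝒟 : Multiset (Finset V), IsConfig G 𝒟 7 3 := by
  obtain ⟨hsub, x, y, P, hP, hdeg, hsup, hAx, hBy, hdisj⟩ := hd
  obtain ⟨e1⟩ := h1
  obtain ⟨e2⟩ := h2
  have hx1 : x ∈ H₁.verts ∧ x ∈ P.support := (Set.ext_iff.mp hAx x).mpr rfl
  have hy1 : y ∈ H₂.verts ∧ y ∈ P.support := (Set.ext_iff.mp hBy y).mpr rfl
  set n := P.length with hn
  -- the first cycle
  set c1 : Fin 4 := e1 ⟨x, hx1.1⟩ with hc1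
  set a : ℕ → V := fun k => ((e1.symm ((k : Fin 4) + c1)) : H₁.verts).1 with ha
  have haV : ∀ k, a k ∈ H₁.verts := fun k => (e1.symm ((k : Fin 4) + c1)).2
  have ha0 : a 0 = x := by
    simp only [ha, Nat.cast_zero, zero_add, hc1, RelIso.symm_apply_apply]
  have haAdj : ∀ k : ℕ, G.Adj (a k) (a (k+1)) := by
    intro k
    have hcadj : (cycleGraph 4).Adj ((k : Fin 4) + c1) (((k+1 : ℕ) : Fin 4) + c1) := by
      rw [cycleGraph_adj (n := 2)]
      right
      push_cast
      ring
    have := e1.symm.map_adj_iff.mpr hcadj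
    exact H₁.coe_adj_sub _ _ this
  have hinja : ∀ k, k < 4 → ∀ l, l < 4 → a k = a l → k = l := by
    intro k hk l hl h
    have h1' : e1.symm ((k : Fin 4) + c1) = e1.symm ((l : Fin 4) + c1) := Subtype.ext h
    have h2' : ((k : Fin 4) + c1) = ((l : Fin 4) + c1) := e1.symm.toEquiv.injective h1'
    have h3' : (k : Fin 4) = (l : Fin 4) := add_right_cancel h2'
    have h4' := congrArg Fin.val h3'
    rwa [Fin.val_cast_of_lt hk, Fin.val_cast_of_lt hl] at h4'
  have hsurjA : ∀ v ∈ H₁.verts, ∃ k, k < 4 ∧ v = a k := by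
    intro v hv
    refine ⟨(e1 ⟨v, hv⟩ - c1).val, Fin.is_lt _, ?_⟩
    show v = (e1.symm ((((e1 ⟨v, hv⟩ - c1).val : ℕ) : Fin 4) + c1)).1
    rw [Fin.cast_val_eq_self, sub_add_cancel, RelIso.symm_apply_apply]
  -- the second cycle
  set c2 : Fin 4 := e2 ⟨y, hy1.1⟩ with hc2
  set b : ℕ → V := fun k => ((e2.symm ((k : Fin 4) + c2)) : H₂.verts).1 with hb
  have hbV : ∀ k, b k ∈ H₂.verts := fun k => (e2.symm ((k : Fin 4) + c2)).2
  have hb0 : b 0 = y := by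
    simp only [hb, Nat.cast_zero, zero_add, hc2, RelIso.symm_apply_apply]
  have hbAdj : ∀ k : ℕ, G.Adj (b k) (b (k+1)) := by
    intro k
    have hcadj : (cycleGraph 4).Adj ((k : Fin 4) + c2) (((k+1 : ℕ) : Fin 4) + c2) := by
      rw [cycleGraph_adj (n := 2)]
      right
      push_cast
      ring
    have := e2.symm.map_adj_iff.mpr hcadj
    exact H₂.coe_adj_sub _ _ this
  have hinjb : ∀ k, k < 4 → ∀ l, l < 4 → b k = b l → k = l := by
    intro k hk l hl h
    have h1' : e2.symm ((k : Fin 4) + c2) = e2.symm ((l : Fin 4) + c2) := Subtype.ext h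
    have h2' : ((k : Fin 4) + c2) = ((l : Fin 4) + c2) := e2.symm.toEquiv.injective h1'
    have h3' : (k : Fin 4) = (l : Fin 4) := add_right_cancel h2'
    have h4' := congrArg Fin.val h3'
    rwa [Fin.val_cast_of_lt hk, Fin.val_cast_of_lt hl] at h4'
  have hsurjB : ∀ v ∈ H₂.verts, ∃ k, k < 4 ∧ v = b k := by
    intro v hv
    refine ⟨(e2 ⟨v, hv⟩ - c2).val, Fin.is_lt _, ?_⟩
    show v = (e2.symm ((((e2 ⟨v, hv⟩ - c2).val : ℕ) : Fin 4) + c2)).1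
    rw [Fin.cast_val_eq_self, sub_add_cancel, RelIso.symm_apply_apply]
  -- the handle
  have hinjp : ∀ i, i ≤ n → ∀ j, j ≤ n → P.getVert i = P.getVert j → i = j :=
    getVert_inj hP
  have hmemsup : ∀ i, i ≤ n → P.getVert i ∈ P.support := fun i hi =>
    SimpleGraph.Walk.mem_support_iff_exists_getVert.mpr ⟨i, rfl, hi⟩
  have hp0 : P.getVert 0 = x := P.getVert_zero
  have hpn : P.getVert n = y := P.getVert_length
  -- coverage
  have hcov : ∀ v : V, v ∈ H₁.verts ∨ v ∈ H₂.verts ∨ v ∈ P.support := by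
    intro v
    have hv : v ∈ (H₁ ⊔ H₂ ⊔ P.toSubgraph).verts := by
      rw [hsup]
      exact Set.mem_univ v
    rw [SimpleGraph.Subgraph.verts_sup, SimpleGraph.Subgraph.verts_sup] at hv
    rcases hv with (h | h) | h
    · exact Or.inl h
    · exact Or.inr (Or.inl h)
    · exact Or.inr (Or.inr ((SimpleGraph.Walk.mem_verts_toSubgraph P).mp h))
  -- cross identifications
  have hapx : ∀ k, k < 4 → ∀ i, i ≤ n → a k = P.getVert i → k = 0 ∧ i = 0 := by
    intro k hk i hi h
    have hmem : a k ∈ H₁.verts ∩ {v | v ∈ P.support} := ⟨haV k, by rw [h]; exact hmemsup i hi⟩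
    rw [hAx] at hmem
    have hax : a k = x := hmem
    have hk0 : k = 0 := hinja k hk 0 (by omega) (by rw [hax, ha0])
    have hpi : P.getVert i = P.getVert 0 := by rw [← h, hax, hp0]
    exact ⟨hk0, hinjp i hi 0 (Nat.zero_le n) hpi⟩
  have hbpy : ∀ k, k < 4 → ∀ i, i ≤ n → b k = P.getVert i → k = 0 ∧ i = n := by
    intro k hk i hi h
    have hmem : b k ∈ H₂.verts ∩ {v | v ∈ P.support} := ⟨hbV k, by rw [h]; exact hmemsup i hi⟩
    rw [hBy] at hmem
    have hby : b k = y := hmem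
    have hk0 : k = 0 := hinjb k hk 0 (by omega) (by rw [hby, hb0])
    have hpi : P.getVert i = P.getVert n := by rw [← h, hby, hpn]
    exact ⟨hk0, hinjp i hi n le_rfl hpi⟩
  have hxy0 : n = 0 → x = y := by
    intro h0
    calc x = P.getVert 0 := hp0.symm
    _ = P.getVert n := by rw [h0]
    _ = y := hpn
  have hxyne : n ≠ 0 → x ≠ y := by
    intro h0 hxy
    have : P.getVert 0 = P.getVert n := by rw [hp0, hpn, hxy]
    have := hinjp 0 (Nat.zero_le n) n le_rfl this
    omega
  have habk : ∀ k, k < 4 → ∀ l, l < 4 → a k = b l → k = 0 ∧ l = 0 := by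
    intro k hk l hl h
    by_cases h0 : n = 0
    · have hxy := hxy0 h0
      have hxmem : x ∈ H₁.verts ∩ H₂.verts := ⟨hx1.1, by rw [hxy]; exact hy1.1⟩
      have hakmem : a k ∈ H₁.verts ∩ H₂.verts := ⟨haV k, by rw [h]; exact hbV l⟩
      have hax : a k = x := hsub hakmem hxmem
      refine ⟨hinja k hk 0 (by omega) (by rw [hax, ha0]), ?_⟩
      have hbly : b l = y := by rw [← h, hax, hxy]
      exact hinjb l hl 0 (by omega) (by rw [hbly, hb0])
    · exfalso
      have hdj := hdisj (hxyne h0)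
      exact (Set.disjoint_left.mp hdj (haV k)) (h ▸ hbV l)
  -- assemble the setup
  have st : Setup G a b P.getVert n := by
    refine ⟨haAdj 0, haAdj 1, haAdj 2, ?_, hbAdj 0, hbAdj 1, hbAdj 2, ?_,
      fun i hi => P.adj_getVert_succ hi, by rw [hp0, ha0], by rw [hpn, hb0],
      ?_, hinja, hinjb, hinjp, hapx, hbpy, habk⟩
    · -- G.Adj (a 3) (a 0) : from haAdj 3 since a 4 = a 0
      have h4 : a 4 = a 0 := by
        have e : ((4:ℕ) : Fin 4) = ((0:ℕ) : Fin 4) := by decide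
        simp only [ha, e]
      have := haAdj 3
      rwa [show (3:ℕ)+1 = 4 from rfl, h4] at this
    · have h4 : b 4 = b 0 := by
        have e : ((4:ℕ) : Fin 4) = ((0:ℕ) : Fin 4) := by decide
        simp only [hb, e]
      have := hbAdj 3
      rwa [show (3:ℕ)+1 = 4 from rfl, h4] at this
    · -- coverage
      intro v
      rcases hcov v with h | h | h
      · exact Or.inl (hsurjA v h)
      · exact Or.inr (Or.inl (hsurjB v h))
      · obtain ⟨i, hgv, hile⟩ := SimpleGraph.Walk.mem_support_iff_exists_getVert.mp h
        exact Or.inr (Or.inr ⟨i, hile, hgv.symm⟩)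
  have h3 : n % 3 = 0 ∨ n % 3 = 1 ∨ n % 3 = 2 := by omega
  rcases h3 with hn3 | hn3 | hn3
  · exact config_table st
      {({1},{1},0), ({2},{2},0), ({3},{3},0), ({2},{1,3},1), ({2},{1,3},1),
        ({1,3},{2},2), ({1,3},{2},2)}
      rfl
      (by
        intro t ht
        fin_cases ht <;>
          refine ⟨by decide, by decide, by decide, ?_, ?_, ?_, ?_, ?_, ?_, ?_, ?_⟩ <;>
            (first | omega | (simp +decide; omega) | (simp +decide)))
      (by decide) (by decide) (by decide)
  · exact config_table st
      {({1},{2},0), ({2},{2},0), ({3},{1,3},0), ({2},{1},1), ({2},{2},1),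
        ({1,3},{3},1), ({1,3},{1,3},2)}
      rfl
      (by
        intro t ht
        fin_cases ht <;>
          refine ⟨by decide, by decide, by decide, ?_, ?_, ?_, ?_, ?_, ?_, ?_, ?_⟩ <;>
            (first | omega | (simp +decide; omega) | (simp +decide)))
      (by decide) (by decide) (by decide)
  · exact config_table st
      {({1},{1,3},0), ({3},{1,3},0), ({2},{2},1), ({2},{2},1), ({2},{2},1),
        ({1,3},{1},2), ({1,3},{3},2)}
      rfl
      (by
        intro t ht
        fin_cases ht <;>
          refine ⟨by decide, by decide, by decide, ?_, ?_, ?_, ?_, ?_, ?_, ?_, ?_⟩ <;>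
            (first | omega | (simp +decide; omega) | (simp +decide)))
      (by decide) (by decide) (by decide)
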